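/- Let T ~ Gam(k, λ) with k, λ > 0, let S₀ > 0, μ̃ ∈ ℝ, σ > 0. Then the density of S_T is f(x) = (2 λ^k / (√(2π) Γ(k) σ (μ̃² + 2σ²λ)^{(2k-1)/4} S₀)) · (x/S₀)^{μ̃/σ² - 1} · |ln(x/S₀)|^{k-1/2} · K_{k-1/2}((√(μ̃² + 2σ²λ)/σ²) |ln(x/S₀)|) for x > 0, x ≠ S₀, where K_ν is the modified Bessel function of the second kind. -/

import Mathlib

open MeasureTheory Real Set Filter

/-- Modified Bessel function of the second kind, via its integral representation. -/
noncomputable def besselK (ν z : ℝ) : ℝ :=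
  2 ^ (ν - 1) * ∫ t in Set.Ioi (0:ℝ), t ^ (ν - 1) * Real.exp (-z * t - z / (4 * t))

/-- Lognormal density with parameters m (log-mean) and v (log-variance). -/
noncomputable def lognormalPdf (m v x : ℝ) : ℝ :=
  (1 / (Real.sqrt (2 * π * v) * x)) * Real.exp (-(Real.log x - m) ^ 2 / (2 * v))

lemma scale_Ioi (g : ℝ → ℝ) {r : ℝ} (hr : 0 < r) :
    ∫ t in Ioi (0:ℝ), g t = r * ∫ u in Ioi (0:ℝ), g (r * u) := by
  rw [integral_comp_mul_left_Ioi g 0 hr, mul_zero, smul_eq_mul, ← mul_assoc,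
    mul_inv_cancel₀ hr.ne', one_mul]

lemma I_eq_besselK (ν c : ℝ) :
    ∫ u in Ioi (0:ℝ), u ^ (ν - 1) * Real.exp (-(c * u) - c / u) = 2 * besselK ν (2 * c) := by
  rw [besselK, scale_Ioi (fun t => t ^ (ν - 1) * Real.exp (-(2*c) * t - 2*c / (4 * t)))
    (by norm_num : (0:ℝ) < 1/2)]
  have h : ∀ u ∈ Ioi (0:ℝ), (1/2 * u) ^ (ν-1) * Real.exp (-(2*c) * (1/2*u) - 2*c / (4 * (1/2*u)))
      = (1/2:ℝ) ^ (ν-1) * (u ^ (ν-1) * Real.exp (-(c*u) - c/u)) := by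
    intro u hu
    rw [Real.mul_rpow (by norm_num) (le_of_lt hu)]
    have hu' : u ≠ 0 := ne_of_gt hu
    rw [mul_assoc]
    congr 2
    field_simp
    ring
  rw [setIntegral_congr_fun measurableSet_Ioi h, integral_const_mul]
  have h21 : (2:ℝ) ^ (ν-1) * (1/2:ℝ)^(ν-1) = 1 := by
    rw [← Real.mul_rpow (by norm_num) (by norm_num)]
    norm_num
  set I := ∫ u in Ioi (0:ℝ), u ^ (ν-1) * Real.exp (-(c*u) - c/u)
  linear_combination (-I) * h21

lemma key_int (ν : ℝ) {a b : ℝ} (ha : 0 < a) (hb : 0 < b) :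
    ∫ t in Ioi (0:ℝ), t ^ (ν - 1) * Real.exp (-(a * t) - b / t)
      = 2 * Real.sqrt (b / a) ^ ν * besselK ν (2 * Real.sqrt (a * b)) := by
  set r := Real.sqrt (b / a) with hr_def
  have hr : 0 < r := Real.sqrt_pos.mpr (div_pos hb ha)
  set c := Real.sqrt (a * b) with hc_def
  have hc : 0 < c := Real.sqrt_pos.mpr (mul_pos ha hb)
  have har : a * r = c := by
    rw [hr_def, hc_def, Real.sqrt_div hb.le, Real.sqrt_mul ha.le]
    rw [show a * (Real.sqrt b / Real.sqrt a) = Real.sqrt b * (a / Real.sqrt a) by ring,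
      Real.div_sqrt]
    ring
  have hbr : b / r = c := by
    rw [hr_def, hc_def, Real.sqrt_div hb.le, Real.sqrt_mul ha.le]
    rw [div_div_eq_mul_div,
      show b * Real.sqrt a / Real.sqrt b = Real.sqrt a * (b / Real.sqrt b) by ring,
      Real.div_sqrt]
  rw [scale_Ioi (fun t => t ^ (ν - 1) * Real.exp (-(a * t) - b / t)) hr]
  have h : ∀ u ∈ Ioi (0:ℝ), (r * u) ^ (ν-1) * Real.exp (-(a * (r * u)) - b / (r * u))
      = r ^ (ν-1) * (u ^ (ν-1) * Real.exp (-(c*u) - c/u)) := by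
    intro u hu
    have e1 : a * (r * u) = c * u := by rw [← har]; ring
    have e2 : b / (r * u) = c / u := by rw [← hbr, div_div]
    rw [Real.mul_rpow hr.le (le_of_lt hu), mul_assoc, e1, e2]
  rw [setIntegral_congr_fun measurableSet_Ioi h, integral_const_mul, I_eq_besselK ν c]
  rw [show r * (r ^ (ν-1) * (2 * besselK ν (2*c))) = (r ^ (1:ℝ) * r ^ (ν-1)) * (2 * besselK ν (2*c)) by rw [Real.rpow_one]; ring, ← Real.rpow_add hr]
  ring_nf

theorem stmt14 (k lam S₀ μt σ x : ℝ) (hk : 0 < k) (hlam : 0 < lam) (hS : 0 < S₀)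
    (hσ : 0 < σ) (hx : 0 < x) (hxS : x ≠ S₀) :
    (∫ t in Set.Ioi (0:ℝ), lognormalPdf (Real.log S₀ + μt * t) (σ ^ 2 * t) x *
        (lam ^ k / Real.Gamma k * t ^ (k - 1) * Real.exp (-lam * t))) =
      2 * lam ^ k /
          (Real.sqrt (2 * π) * Real.Gamma k * σ *
            (μt ^ 2 + 2 * σ ^ 2 * lam) ^ ((2 * k - 1) / 4) * S₀) *
        (x / S₀) ^ (μt / σ ^ 2 - 1) * |Real.log (x / S₀)| ^ (k - 1/2) *
        besselK (k - 1/2)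
          (Real.sqrt (μt ^ 2 + 2 * σ ^ 2 * lam) / σ ^ 2 * |Real.log (x / S₀)|) := by
  have hσ2 : (σ:ℝ) ^ 2 ≠ 0 := by positivity
  have hΓ : Real.Gamma k ≠ 0 := (Real.Gamma_pos_of_pos hk).ne'
  have hsπ : Real.sqrt (2 * π) ≠ 0 := by
    have : (0:ℝ) < 2 * π := by positivity
    positivity
  set y := Real.log x - Real.log S₀ with hy_def
  have hlxS : Real.log (x / S₀) = y := Real.log_div hx.ne' hS.ne'
  have hy : y ≠ 0 := by
    rw [hy_def]
    exact sub_ne_zero.mpr fun h =>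
      hxS (Real.log_injOn_pos (Set.mem_Ioi.mpr hx) (Set.mem_Ioi.mpr hS) h)
  set M := μt ^ 2 + 2 * σ ^ 2 * lam with hM_def
  have hM : 0 < M := by positivity
  set a := M / (2 * σ ^ 2) with ha_def
  set b := y ^ 2 / (2 * σ ^ 2) with hb_def
  have ha : 0 < a := by positivity
  have hb : 0 < b := by
    rw [hb_def]
    have : 0 < y ^ 2 := by positivity
    positivity
  set C := lam ^ k / Real.Gamma k * Real.exp (μt * y / σ ^ 2) / (Real.sqrt (2 * π) * σ * x)
    with hC_def
  have hcong : ∀ t ∈ Ioi (0:ℝ),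
      lognormalPdf (Real.log S₀ + μt * t) (σ ^ 2 * t) x *
        (lam ^ k / Real.Gamma k * t ^ (k - 1) * Real.exp (-lam * t))
      = C * (t ^ ((k - 1/2) - 1) * Real.exp (-(a * t) - b / t)) := by
    intro t ht
    rw [Set.mem_Ioi] at ht
    have hst : Real.sqrt t ≠ 0 := (Real.sqrt_pos.mpr ht).ne'
    have h1 : Real.sqrt (2 * π * (σ ^ 2 * t)) = Real.sqrt (2 * π) * σ * Real.sqrt t := by
      rw [Real.sqrt_mul (by positivity) (σ ^ 2 * t),
        Real.sqrt_mul (by positivity : (0:ℝ) ≤ σ ^ 2) t, Real.sqrt_sq hσ.le, ← mul_assoc]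
    have h3 : t ^ (k - 1) = Real.sqrt t * t ^ ((k - 1/2) - 1) := by
      rw [Real.sqrt_eq_rpow, ← Real.rpow_add ht]
      congr 1
      ring
    have h4 : Real.exp (μt * y / σ ^ 2) * Real.exp (-(a * t) - b / t)
        = Real.exp (-(Real.log x - (Real.log S₀ + μt * t)) ^ 2 / (2 * (σ ^ 2 * t)))
          * Real.exp (-lam * t) := by
      rw [← Real.exp_add, ← Real.exp_add]
      congr 1
      rw [ha_def, hb_def, hM_def, hy_def]
      field_simp
      ring
    rw [lognormalPdf, h1, h3,
      show C * (t ^ ((k - 1/2) - 1) * Real.exp (-(a * t) - b / t))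
        = lam ^ k / Real.Gamma k / (Real.sqrt (2 * π) * σ * x) * t ^ ((k - 1/2) - 1) *
          (Real.exp (μt * y / σ ^ 2) * Real.exp (-(a * t) - b / t)) from by
        rw [hC_def]; ring,
      h4]
    field_simp
  rw [setIntegral_congr_fun measurableSet_Ioi hcong, integral_const_mul,
    key_int (k - 1/2) ha hb, hlxS]
  have hsab : Real.sqrt (a * b) = Real.sqrt M * |y| / (2 * σ ^ 2) := by
    rw [show a * b = (Real.sqrt M * |y| / (2 * σ ^ 2)) ^ 2 by
      rw [div_pow, mul_pow, Real.sq_sqrt hM.le, sq_abs, ha_def, hb_def]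
      field_simp]
    exact Real.sqrt_sq (by positivity)
  have hab : 2 * Real.sqrt (a * b) = Real.sqrt M / σ ^ 2 * |y| := by
    rw [hsab]; field_simp
  have hba : Real.sqrt (b / a) = |y| / Real.sqrt M := by
    rw [show b / a = (|y| / Real.sqrt M) ^ 2 by
      rw [div_pow, Real.sq_sqrt hM.le, sq_abs, ha_def, hb_def]
      field_simp]
    exact Real.sqrt_sq (by positivity)
  have hpow : (|y| / Real.sqrt M) ^ (k - 1/2) = |y| ^ (k - 1/2) / M ^ ((2 * k - 1) / 4) := by
    rw [Real.div_rpow (abs_nonneg y) (Real.sqrt_nonneg M), Real.sqrt_eq_rpow,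
      ← Real.rpow_mul hM.le]
    congr 2
    ring
  have hxs : (x / S₀) ^ (μt / σ ^ 2 - 1) = Real.exp (μt * y / σ ^ 2) * (S₀ / x) := by
    rw [Real.rpow_def_of_pos (div_pos hx hS), hlxS,
      show y * (μt / σ ^ 2 - 1) = μt * y / σ ^ 2 + -y by field_simp; ring,
      Real.exp_add,
      show -y = Real.log (S₀ / x) by rw [Real.log_div hS.ne' hx.ne', hy_def]; ring,
      Real.exp_log (div_pos hS hx)]
  rw [hab, hba, hpow, hxs, hC_def]
  have hMp : M ^ ((2 * k - 1) / 4) ≠ 0 := (Real.rpow_pos_of_pos hM _).ne'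
  field_simp
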